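/- For every profile P and every alternative x ∈ A, Sc_T[P](x)/2 ≤ Sc_Q[P](x) ≤ Sc_D[P](x); that is, half the Tideman score and the DQ score are lower bounds for the Dodgson score. -/

import Mathlib

open Finset Filter

/-- A vote (strict linear order) on `m` alternatives, encoded by its position map:
`v x` is the position of alternative `x`, position `0` being the top.
`v` ranks `x` above `y` iff `v x < v y`. -/
abbrev Vote (m : ℕ) := Equiv.Perm (Fin m)

/-- A profile is a list of `n` votes, one per agent. -/
abbrev Profile (m n : ℕ) := Fin n → Vote m

/-- `n_{xy}[P]`: the number of votes in `P` ranking `x` above `y`. -/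
def nAbove {m n : ℕ} (P : Profile m n) (x y : Fin m) : ℕ :=
  (Finset.univ.filter (fun i => P i x < P i y)).card

/-- `adv[P](x,y) = max (0, n_{xy} - n_{yx})` (truncated subtraction on `ℕ`). -/
def adv {m n : ℕ} (P : Profile m n) (x y : Fin m) : ℕ :=
  nAbove P x y - nAbove P y x

/-- The Tideman score `Sc_T[P](a) = Σ_{b ≠ a} adv[P](b,a)`. -/
def ScT {m n : ℕ} (P : Profile m n) (a : Fin m) : ℕ :=
  ∑ b ∈ Finset.univ.filter (fun b => b ≠ a), adv P b a

/-- The Dodgson Quick score `Sc_Q[P](a) = Σ_{b ≠ a} ⌈adv[P](b,a)/2⌉`. -/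
def ScQ {m n : ℕ} (P : Profile m n) (a : Fin m) : ℕ :=
  ∑ b ∈ Finset.univ.filter (fun b => b ≠ a), (adv P b a + 1) / 2

/-- `a` is a Condorcet-tie winner of `P` iff `adv[P](b,a) = 0` for all `b ≠ a`. -/
def CondorcetTieWinner {m n : ℕ} (P : Profile m n) (a : Fin m) : Prop :=
  ∀ b, b ≠ a → adv P b a = 0

/-- `a` is a Condorcet winner of `P` iff `adv[P](a,b) > 0` for all `b ≠ a`. -/
def CondorcetWinner {m n : ℕ} (P : Profile m n) (a : Fin m) : Prop :=
  ∀ b, b ≠ a → 0 < adv P a b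

/-- `w` is obtained from the vote `v` by one swap of neighbouring alternatives
(the alternatives at consecutive positions `p` and `p+1` are exchanged). -/
def AdjSwapVote {m : ℕ} (v w : Vote m) : Prop :=
  ∃ p q : Fin m, (q : ℕ) = (p : ℕ) + 1 ∧ w = v.trans (Equiv.swap p q)

/-- `Q` is obtained from the profile `P` by one adjacent swap in one vote. -/
def AdjSwap {m n : ℕ} (P Q : Profile m n) : Prop :=
  ∃ i : Fin n, AdjSwapVote (P i) (Q i) ∧ ∀ j, j ≠ i → Q j = P j

/-- `Reach r k P Q`: `Q` can be obtained from `P` by exactly `k` steps of `r`. -/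
def Reach {α : Type*} (r : α → α → Prop) : ℕ → α → α → Prop
  | 0, P, Q => P = Q
  | (k+1), P, Q => ∃ R, r P R ∧ Reach r k R Q

/-- The Dodgson score `Sc_D[P](a)`: the minimum number of adjacent swaps needed to
transform `P` into a profile in which `a` is a Condorcet-tie winner. -/
noncomputable def ScD {m n : ℕ} (P : Profile m n) (a : Fin m) : ℕ :=
  sInf {k | ∃ Q, Reach AdjSwap k P Q ∧ CondorcetTieWinner Q a}

/-- Variant of the Dodgson score requiring `a` to become a Condorcet winner. -/
noncomputable def ScD' {m n : ℕ} (P : Profile m n) (a : Fin m) : ℕ :=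
  sInf {k | ∃ Q, Reach AdjSwap k P Q ∧ CondorcetWinner Q a}

/- Voting situations: multisets of votes.  Scores depend only on the voting
situation of a profile, so we define them directly on multisets. -/

/-- Number of votes in the voting situation `S` ranking `x` above `y`. -/
def snAbove {m : ℕ} (S : Multiset (Vote m)) (x y : Fin m) : ℕ :=
  (S.filter (fun v => v x < v y)).card

def sadv {m : ℕ} (S : Multiset (Vote m)) (x y : Fin m) : ℕ :=
  snAbove S x y - snAbove S y x

/-- Tideman score of a voting situation. -/
def sScT {m : ℕ} (S : Multiset (Vote m)) (a : Fin m) : ℕ :=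
  ∑ b ∈ Finset.univ.filter (fun b => b ≠ a), sadv S b a

/-- Dodgson Quick score of a voting situation. -/
def sScQ {m : ℕ} (S : Multiset (Vote m)) (a : Fin m) : ℕ :=
  ∑ b ∈ Finset.univ.filter (fun b => b ≠ a), (sadv S b a + 1) / 2

def sCondorcetTieWinner {m : ℕ} (S : Multiset (Vote m)) (a : Fin m) : Prop :=
  ∀ b, b ≠ a → sadv S b a = 0

/-- One adjacent swap applied to one vote of a voting situation. -/
def sAdjSwap {m : ℕ} (S T : Multiset (Vote m)) : Prop :=
  ∃ v ∈ S, ∃ w, AdjSwapVote v w ∧ T = w ::ₘ S.erase v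

/-- Dodgson score of a voting situation. -/
noncomputable def sScD {m : ℕ} (S : Multiset (Vote m)) (a : Fin m) : ℕ :=
  sInf {k | ∃ T, Reach sAdjSwap k S T ∧ sCondorcetTieWinner T a}

/-- `a` is a Tideman winner (minimal Tideman score). -/
def sTWinner {m : ℕ} (S : Multiset (Vote m)) (a : Fin m) : Prop :=
  ∀ b, sScT S a ≤ sScT S b

/-- `a` is a DQ winner (minimal DQ score). -/
def sQWinner {m : ℕ} (S : Multiset (Vote m)) (a : Fin m) : Prop :=
  ∀ b, sScQ S a ≤ sScQ S b

/-- `a` is a Dodgson winner (minimal Dodgson score). -/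
def sDWinner {m : ℕ} (S : Multiset (Vote m)) (a : Fin m) : Prop :=
  ∀ b, sScD S a ≤ sScD S b

/-- Order of a pair is unchanged by an adjacent swap unless it is the swapped pair. -/
lemma swap_lt_iff {m : ℕ} (v : Vote m) (p q : Fin m) (hpq : (q : ℕ) = (p : ℕ) + 1)
    (b a : Fin m) (h1 : ¬(v b = p ∧ v a = q)) (h2 : ¬(v b = q ∧ v a = p)) :
    (v.trans (Equiv.swap p q)) b < (v.trans (Equiv.swap p q)) a ↔ v b < v a := by
  simp only [Fin.ext_iff, not_and] at h1 h2
  simp only [Equiv.trans_apply, Equiv.swap_apply_def, Fin.ext_iff, Fin.lt_def]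
  split_ifs with h3 h4 h5 h6 h7 h8 <;> omega

lemma filter_card_le_of_agree {n : ℕ} (i : Fin n) (pr1 pr2 : Fin n → Prop)
    [DecidablePred pr1] [DecidablePred pr2] (h : ∀ j, j ≠ i → (pr1 j ↔ pr2 j)) :
    (Finset.univ.filter pr1).card ≤ (Finset.univ.filter pr2).card + 1 := by
  have hsub : Finset.univ.filter pr1 ⊆ insert i (Finset.univ.filter pr2) := by
    intro j hj
    simp only [Finset.mem_filter, Finset.mem_univ, true_and] at hj
    simp only [Finset.mem_insert, Finset.mem_filter, Finset.mem_univ, true_and]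
    by_cases hji : j = i
    · exact Or.inl hji
    · exact Or.inr ((h j hji).mp hj)
  calc (Finset.univ.filter pr1).card ≤ (insert i (Finset.univ.filter pr2)).card :=
        Finset.card_le_card hsub
    _ ≤ (Finset.univ.filter pr2).card + 1 := Finset.card_insert_le _ _

lemma scq_step {m n : ℕ} {P Q : Profile m n} (h : AdjSwap P Q) (a : Fin m) :
    ScQ P a ≤ ScQ Q a + 1 := by
  obtain ⟨i, ⟨p, q, hpq, hw⟩, hoth⟩ := h
  set v : Vote m := P i with hv
  have hQi : Q i = v.trans (Equiv.swap p q) := hw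
  set u : Fin m := v.symm p with hu
  set z : Fin m := v.symm q with hz
  have hvu : v u = p := v.apply_symm_apply p
  have hvz : v z = q := v.apply_symm_apply q
  have huz : u ≠ z := by
    intro hh
    rw [hh] at hvu
    rw [hvu] at hvz
    omega
  set b0 : Fin m := if a = u then z else u with hb0
  have hb0a : b0 ≠ a := by
    rw [hb0]
    split_ifs with hau
    · intro hh; exact huz (hau ▸ hh.symm)
    · intro hh; exact hau hh.symm
  have hcond : ∀ b, b ≠ b0 → ¬(v b = p ∧ v a = q) ∧ ¬(v b = q ∧ v a = p) := by
    intro b hb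
    have hbu : v b = p ↔ b = u := by
      constructor
      · intro hh; have := congrArg v.symm hh; simpa using this
      · intro hh; rw [hh]; exact hvu
    have hbz : v b = q ↔ b = z := by
      constructor
      · intro hh; have := congrArg v.symm hh; simpa using this
      · intro hh; rw [hh]; exact hvz
    have hau' : v a = q ↔ a = z := by
      constructor
      · intro hh; have := congrArg v.symm hh; simpa using this
      · intro hh; rw [hh]; exact hvz
    have hap : v a = p ↔ a = u := by
      constructor
      · intro hh; have := congrArg v.symm hh; simpa using this
      · intro hh; rw [hh]; exact hvu
    rw [hb0] at hb
    constructor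
    · rintro ⟨h1, h2⟩
      rw [hbu] at h1; rw [hau'] at h2
      by_cases hau : a = u
      · exact huz (hau ▸ h2.symm ▸ rfl)
      · simp only [if_neg hau] at hb; exact hb h1
    · rintro ⟨h1, h2⟩
      rw [hbz] at h1; rw [hap] at h2
      by_cases hau : a = u
      · simp only [if_pos hau] at hb; exact hb h1
      · exact hau h2
  -- unchanged terms
  have hsame : ∀ b, b ≠ b0 → adv Q b a = adv P b a := by
    intro b hb
    obtain ⟨hc1, hc2⟩ := hcond b hb
    have key : ∀ c d : Fin m, ¬(v c = p ∧ v d = q) → ¬(v c = q ∧ v d = p) →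
        nAbove Q c d = nAbove P c d := by
      intro c d k1 k2
      unfold nAbove
      congr 1
      apply Finset.filter_congr
      intro j _
      by_cases hji : j = i
      · subst hji
        rw [hQi]
        exact swap_lt_iff v p q hpq c d k1 k2
      · rw [hoth j hji]
    have e1 : nAbove Q b a = nAbove P b a := key b a hc1 hc2
    have e2 : nAbove Q a b = nAbove P a b := by
      apply key
      · rintro ⟨k1, k2⟩; exact hc2 ⟨k2, k1⟩
      · rintro ⟨k1, k2⟩; exact hc1 ⟨k2, k1⟩
    unfold adv
    rw [e1, e2]
  -- changed term: bounded change
  have hchange : adv P b0 a ≤ adv Q b0 a + 2 := by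
    have e1 : nAbove P b0 a ≤ nAbove Q b0 a + 1 := by
      apply filter_card_le_of_agree i
      intro j hj
      rw [hoth j hj]
    have e2 : nAbove Q a b0 ≤ nAbove P a b0 + 1 := by
      apply filter_card_le_of_agree i
      intro j hj
      rw [hoth j hj]
    unfold adv
    omega
  -- sum manipulation
  have hb0mem : b0 ∈ Finset.univ.filter (fun b => b ≠ a) := by
    simp [hb0a]
  unfold ScQ
  rw [← Finset.sum_erase_add _ _ hb0mem, ← Finset.sum_erase_add _ (fun b => (adv Q b a + 1) / 2) hb0mem]
  have heq : ∑ b ∈ (Finset.univ.filter (fun b => b ≠ a)).erase b0, (adv P b a + 1) / 2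
      = ∑ b ∈ (Finset.univ.filter (fun b => b ≠ a)).erase b0, (adv Q b a + 1) / 2 := by
    apply Finset.sum_congr rfl
    intro b hb
    rw [hsame b (Finset.ne_of_mem_erase hb)]
  rw [heq]
  have : (adv P b0 a + 1) / 2 ≤ (adv Q b0 a + 1) / 2 + 1 := by omega
  omega

lemma scq_reach {m n : ℕ} : ∀ (k : ℕ) {P Q : Profile m n}, Reach AdjSwap k P Q →
    ∀ a, ScQ P a ≤ ScQ Q a + k := by
  intro k
  induction k with
  | zero => intro P Q h a; cases h; omega
  | succ k ih =>
    intro P Q h a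
    obtain ⟨R, h1, h2⟩ := h
    have := scq_step h1 a
    have := ih h2 a
    omega

lemma scq_of_ctw {m n : ℕ} {Q : Profile m n} {a : Fin m} (h : CondorcetTieWinner Q a) :
    ScQ Q a = 0 := by
  unfold ScQ
  apply Finset.sum_eq_zero
  intro b hb
  simp only [Finset.mem_filter, Finset.mem_univ, true_and] at hb
  rw [h b hb]
  norm_num

lemma exists_reach_ctw {m n : ℕ} (P : Profile m n) (x : Fin m) :
    ∃ k Q, Reach AdjSwap k P Q ∧ CondorcetTieWinner Q x := by
  suffices H : ∀ N (P : Profile m n), (∑ i, ((P i x : Fin m) : ℕ)) = N →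
      ∃ k Q, Reach AdjSwap k P Q ∧ CondorcetTieWinner Q x from H _ P rfl
  intro N
  induction N using Nat.strong_induction_on with
  | _ N ih =>
    intro P hN
    by_cases h0 : N = 0
    · refine ⟨0, P, rfl, ?_⟩
      intro b hb
      have hall : ∀ i, (P i x : ℕ) = 0 := by
        intro i
        subst h0
        have := Finset.sum_eq_zero_iff.mp hN i (Finset.mem_univ i)
        exact this
      have : nAbove P b x = 0 := by
        unfold nAbove
        apply Finset.card_eq_zero.mpr
        apply Finset.filter_eq_empty_iff.mpr
        intro i _
        simp only [not_lt]
        rw [Fin.le_def, hall i]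
        omega
      unfold adv
      omega
    · have hpos : 0 < N := Nat.pos_of_ne_zero h0
      have : ∃ i, 0 < (P i x : ℕ) := by
        by_contra hc
        push_neg at hc
        have : (∑ i, ((P i x : Fin m) : ℕ)) = 0 :=
          Finset.sum_eq_zero fun i _ => Nat.le_zero.mp (hc i)
        omega
      obtain ⟨i, hi⟩ := this
      set q : Fin m := P i x with hq
      have hqm : (q : ℕ) < m := q.isLt
      set p : Fin m := ⟨(q : ℕ) - 1, by omega⟩ with hp
      have hpq : (q : ℕ) = (p : ℕ) + 1 := by
        have : (p : ℕ) = (q : ℕ) - 1 := rfl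
        omega
      set w : Vote m := (P i).trans (Equiv.swap p q) with hwdef
      set Q : Profile m n := Function.update P i w with hQ
      have hQi : Q i = w := Function.update_self i w P
      have hQj : ∀ j, j ≠ i → Q j = P j := fun j hj => Function.update_of_ne hj w P
      have hswap : AdjSwap P Q := ⟨i, ⟨p, q, hpq, by rw [hQi]⟩, hQj⟩
      have hwx : (Q i x : ℕ) = (q : ℕ) - 1 := by
        rw [hQi, hwdef]
        simp only [Equiv.trans_apply, ← hq, Equiv.swap_apply_right]
        rfl
      have hsum : (∑ j, ((Q j x : Fin m) : ℕ)) < N := by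
        have hfun : (fun j => ((Q j x : Fin m) : ℕ))
            = Function.update (fun j => ((P j x : Fin m) : ℕ)) i ((q : ℕ) - 1) := by
          funext j
          by_cases hj : j = i
          · subst hj; rw [hwx]; simp [Function.update_self]
          · rw [hQj j hj, Function.update_of_ne hj]
        calc (∑ j, ((Q j x : Fin m) : ℕ))
            = ∑ j, Function.update (fun j => ((P j x : Fin m) : ℕ)) i ((q : ℕ) - 1) j := by
              rw [← hfun]
          _ = ((q : ℕ) - 1) + ∑ j ∈ Finset.univ.erase i, ((P j x : Fin m) : ℕ) := by
              rw [Finset.sum_update_of_mem (Finset.mem_univ i)]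
              congr 1
              apply Finset.sum_congr
              · ext j; simp [Finset.mem_erase, and_comm, eq_comm]
              · intros; rfl
          _ < (q : ℕ) + ∑ j ∈ Finset.univ.erase i, ((P j x : Fin m) : ℕ) := by omega
          _ = N := by
              rw [← hN, ← Finset.add_sum_erase _ _ (Finset.mem_univ i)]
      obtain ⟨k, Q', hr, hc⟩ := ih _ hsum Q rfl
      exact ⟨k + 1, Q', ⟨Q, hswap, hr⟩, hc⟩

/-- Half the Tideman score and the DQ score are lower bounds for the Dodgson
score: `Sc_T[P](x)/2 ≤ Sc_Q[P](x) ≤ Sc_D[P](x)`. -/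
theorem stmt_18 {m n : ℕ} (hm : 2 ≤ m) (P : Profile m n) (x : Fin m) :
    (ScT P x : ℚ) / 2 ≤ (ScQ P x : ℚ) ∧ ScQ P x ≤ ScD P x := by
  constructor
  · rw [div_le_iff₀ (by norm_num : (0:ℚ) < 2)]
    have h : ScT P x ≤ 2 * ScQ P x := by
      unfold ScT ScQ
      rw [Finset.mul_sum]
      apply Finset.sum_le_sum
      intro b _
      omega
    calc (ScT P x : ℚ) ≤ ((2 * ScQ P x : ℕ) : ℚ) := by exact_mod_cast h
      _ = (ScQ P x : ℚ) * 2 := by push_cast; ring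
  · unfold ScD
    have hne : {k | ∃ Q, Reach AdjSwap k P Q ∧ CondorcetTieWinner Q x}.Nonempty := by
      obtain ⟨k, Q, hr, hc⟩ := exists_reach_ctw P x
      exact ⟨k, Q, hr, hc⟩
    obtain ⟨Q, hr, hc⟩ := Nat.sInf_mem hne
    have := scq_reach _ hr x
    rw [scq_of_ctw hc] at this
    omega
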